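/- arXiv:2401.10539 — 3 statements merged into one kernel-verified Lean document; each statement's English description precedes it below -/
import Mathlib

section
/- Suppose real numbers OPT ≥ 0, 0 ≤ γ_x ≤ 1, γ_min ≤ γ_x, k ≥ 1 an integer, and i < k a natural number. If f(x) ≥ (1 − (1 − γ_min/k)^i)·OPT and f(x') ≥ (1 − γ_x/k)·f(x) + (γ_x/k)·OPT, then f(x') ≥ (1 − (1 − γ_min/k)^{i+1})·OPT. -/
theorem stmt_4 (OPT γx γmin fx fx' : ℝ) (k : ℕ) (i : ℕ)
    (hOPT : 0 ≤ OPT) (hγx0 : 0 ≤ γx) (hγx1 : γx ≤ 1) (hγmin : γmin ≤ γx)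
    (hk : 1 ≤ k) (hi : i < k)
    (hfx : fx ≥ (1 - (1 - γmin / k) ^ i) * OPT)
    (hfx' : fx' ≥ (1 - γx / k) * fx + (γx / k) * OPT) :
    fx' ≥ (1 - (1 - γmin / k) ^ (i + 1)) * OPT := by
  have hk1 : (1 : ℝ) ≤ (k : ℝ) := by exact_mod_cast hk
  have hkpos : (0 : ℝ) < (k : ℝ) := by linarith
  have hx : 0 ≤ 1 - γx / k := by
    have : γx / k ≤ 1 := by
      rw [div_le_one hkpos]; linarith
    linarith
  have hm : 1 - γx / k ≤ 1 - γmin / k := by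
    have : γmin / k ≤ γx / k := by
      gcongr
    linarith
  have ha0 : 0 ≤ 1 - γmin / k := le_trans hx hm
  have hpow : 0 ≤ (1 - γmin / k) ^ i := pow_nonneg ha0 i
  have h1 : (1 - γx / k) * fx ≥ (1 - γx / k) * ((1 - (1 - γmin / k) ^ i) * OPT) :=
    mul_le_mul_of_nonneg_left hfx hx
  have h2 : (1 - γx / k) * ((1 - γmin / k) ^ i) ≤ (1 - γmin / k) ^ (i + 1) := by
    rw [pow_succ']
    exact mul_le_mul_of_nonneg_right hm hpow
  nlinarith [mul_le_mul_of_nonneg_right h2 hOPT]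
end

section
/- Let U be a finite ground set with |U| = m, V = {S_1,…,S_n} a collection of subsets of U with positive weights w_i, and suppose x* ⊆ V covers U (⋃_{S∈x*} S = U) with total weight OPT. Then for any x ⊆ V with c(x) = k < m (where c(x) = |⋃_{S∈x} S|), there exists an index i with S_i ∉ x and c(x∪{S_i}) > c(x) such that w_i / (c(x∪{S_i}) − c(x)) ≤ OPT / (m − k). -/
open Finset

theorem stmt_6 {U : Type*} [Fintype U] [DecidableEq U] {n m : ℕ}
    (hm : Fintype.card U = m)
    (S : Fin n → Finset U) (w : Fin n → ℝ) (hw : ∀ i, 0 < w i)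
    (xstar : Finset (Fin n)) (hcover : xstar.biUnion S = Finset.univ)
    (x : Finset (Fin n)) (k : ℕ) (hk : (x.biUnion S).card = k) (hkm : k < m) :
    ∃ i : Fin n, i ∉ x ∧ ((insert i x).biUnion S).card > (x.biUnion S).card ∧
      w i / ((((insert i x).biUnion S).card : ℝ) - ((x.biUnion S).card : ℝ)) ≤
        (∑ j ∈ xstar, w j) / ((m : ℝ) - (k : ℝ)) := by
  classical
  set A := x.biUnion S with hA
  set d : Fin n → ℕ := fun i => (S i \ A).card with hd
  set T := xstar.filter (fun i => 0 < d i) with hT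
  -- T is nonempty
  obtain ⟨u, hu⟩ : ∃ u, u ∉ A := by
    by_contra h
    push_neg at h
    have : A = univ := eq_univ_iff_forall.mpr h
    rw [this, card_univ, hm] at hk
    omega
  have humem : u ∈ xstar.biUnion S := hcover ▸ mem_univ u
  obtain ⟨j, hj, hju⟩ := mem_biUnion.mp humem
  have hTne : T.Nonempty :=
    ⟨j, mem_filter.mpr ⟨hj, card_pos.mpr ⟨u, mem_sdiff.mpr ⟨hju, hu⟩⟩⟩⟩
  obtain ⟨i, hiT, hmin⟩ := T.exists_min_image (fun i => w i / (d i : ℝ)) hTne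
  have hiX : i ∈ xstar := (mem_filter.mp hiT).1
  have hdi : 0 < d i := (mem_filter.mp hiT).2
  have hinx : i ∉ x := by
    intro h
    have hsub : S i ⊆ A := subset_biUnion_of_mem S h
    have : S i \ A = ∅ := sdiff_eq_empty_iff_subset.mpr hsub
    simp [hd, this] at hdi
  -- card of insert
  have hcardins : ((insert i x).biUnion S).card = d i + A.card := by
    rw [biUnion_insert, ← card_sdiff_add_card]
  have hgain : ((insert i x).biUnion S).card > A.card := by omega
  have hdiff : (((insert i x).biUnion S).card : ℝ) - (A.card : ℝ) = (d i : ℝ) := by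
    rw [hcardins]; push_cast; ring
  -- coverage sum bound : m - k ≤ ∑ j in T, d j
  have hsubcov : univ \ A ⊆ T.biUnion (fun j => S j \ A) := by
    intro v hv
    have hvA : v ∉ A := (mem_sdiff.mp hv).2
    obtain ⟨l, hl, hlv⟩ := mem_biUnion.mp (hcover ▸ mem_univ v)
    exact mem_biUnion.mpr ⟨l, mem_filter.mpr ⟨hl,
      card_pos.mpr ⟨v, mem_sdiff.mpr ⟨hlv, hvA⟩⟩⟩, mem_sdiff.mpr ⟨hlv, hvA⟩⟩
  have hsum : m - k ≤ ∑ j ∈ T, d j := by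
    calc m - k = (univ \ A).card := by
          rw [card_sdiff_of_subset (subset_univ A), card_univ, hm, hk]
      _ ≤ (T.biUnion (fun j => S j \ A)).card := card_le_card hsubcov
      _ ≤ ∑ j ∈ T, d j := card_biUnion_le
  -- real arithmetic
  set r : ℝ := w i / (d i : ℝ) with hr
  have hrpos : 0 < r := div_pos (hw i) (by exact_mod_cast hdi)
  have hmk : (0 : ℝ) < (m : ℝ) - (k : ℝ) := by
    have : (k : ℝ) < (m : ℝ) := by exact_mod_cast hkm
    linarith
  have hrd : ∀ j ∈ T, r * (d j : ℝ) ≤ w j := by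
    intro l hl
    have hdl : 0 < d l := (mem_filter.mp hl).2
    have hdl' : (0 : ℝ) < (d l : ℝ) := by exact_mod_cast hdl
    have := hmin l hl
    calc r * (d l : ℝ) ≤ (w l / (d l : ℝ)) * (d l : ℝ) := by nlinarith
      _ = w l := by field_simp
  have hkey : r * ((m : ℝ) - (k : ℝ)) ≤ ∑ j ∈ xstar, w j := by
    have h1 : r * ((m : ℝ) - (k : ℝ)) ≤ r * (∑ j ∈ T, (d j : ℝ)) := by
      apply mul_le_mul_of_nonneg_left _ hrpos.le
      have : ((m - k : ℕ) : ℝ) ≤ ((∑ j ∈ T, d j : ℕ) : ℝ) := by exact_mod_cast hsum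
      push_cast at this
      rw [Nat.cast_sub hkm.le] at this
      exact this
    have h2 : r * (∑ j ∈ T, (d j : ℝ)) ≤ ∑ j ∈ T, w j := by
      rw [mul_sum]
      exact Finset.sum_le_sum hrd
    have h3 : ∑ j ∈ T, w j ≤ ∑ j ∈ xstar, w j :=
      Finset.sum_le_sum_of_subset_of_nonneg (filter_subset _ _)
        (fun l _ _ => (hw l).le)
    linarith
  refine ⟨i, hinx, hgain, ?_⟩
  rw [hdiff, ← hr, div_le_div_iff₀ (by exact_mod_cast hdi) hmk]
  have : r * (d i : ℝ) = w i := by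
    rw [hr]; field_simp
  calc w i * ((m:ℝ) - (k:ℝ)) = (r * (d i : ℝ)) * ((m:ℝ) - (k:ℝ)) := by rw [this]
    _ = (r * ((m:ℝ) - (k:ℝ))) * (d i : ℝ) := by ring
    _ ≤ (∑ j ∈ xstar, w j) * (d i : ℝ) := by
        apply mul_le_mul_of_nonneg_right hkey (by positivity)
end

section
/- In the maximum coverage instance on K_{(1+δ)n/3,(2−δ)n/3} with budget k = (1+δ)n/3 (0 < δ < 1/2, all quantities integers), let x_local be a feasible solution consisting of exactly k right-side sets. Then any feasible solution y with f(y) > f(x_local) must contain at least δn left-side sets not in x_local and must omit at least δn of the right-side sets of x_local; i.e., |y ∖ x_local| ≥ δn restricted to left sets and |x_local ∖ y| ≥ δn. -/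
open Finset

def bipSets (a b : ℕ) : (Fin a ⊕ Fin b) → Finset (Fin a × Fin b)
  | Sum.inl i => {i} ×ˢ Finset.univ
  | Sum.inr j => Finset.univ ×ˢ {j}

def bipCov (a b : ℕ) (x : Finset (Fin a ⊕ Fin b)) : ℕ :=
  (x.biUnion (bipSets a b)).card

lemma bipCov_eq (a b : ℕ) (x : Finset (Fin a ⊕ Fin b)) :
    bipCov a b x + x.toLeft.card * x.toRight.card
      = x.toLeft.card * b + a * x.toRight.card := by
  have hU : x.biUnion (bipSets a b) = x.toLeft ×ˢ univ ∪ univ ×ˢ x.toRight := by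
    ext ⟨i, j⟩
    simp only [mem_biUnion, mem_union, mem_product, mem_univ, and_true, true_and,
      mem_toLeft, mem_toRight]
    constructor
    · rintro ⟨s, hs, hmem⟩
      rcases s with i' | j'
      · left; simp [bipSets] at hmem; simpa [hmem] using hs
      · right; simp [bipSets] at hmem; simpa [hmem] using hs
    · rintro (h | h)
      · exact ⟨Sum.inl i, h, by simp [bipSets]⟩
      · exact ⟨Sum.inr j, h, by simp [bipSets]⟩
  have hI : (x.toLeft ×ˢ univ) ∩ (univ ×ˢ x.toRight) = x.toLeft ×ˢ x.toRight := by
    ext ⟨i, j⟩; simp [mem_product, and_comm]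
  have := card_union_add_card_inter (x.toLeft ×ˢ (univ : Finset (Fin b)))
    ((univ : Finset (Fin a)) ×ˢ x.toRight)
  rw [hI] at this
  simp only [card_product, card_univ, Fintype.card_fin] at this
  rw [bipCov, hU]
  omega

theorem stmt_15 (n a b d : ℕ) (δ : ℝ) (hδ0 : 0 < δ) (hδ2 : δ < 1 / 2)
    (ha : (a : ℝ) = (1 + δ) * n / 3) (hb : (b : ℝ) = (2 - δ) * n / 3)
    (hd : (d : ℝ) = δ * n)
    (xlocal : Finset (Fin a ⊕ Fin b))
    (hxr : ∀ s ∈ xlocal, s.isRight) (hxc : xlocal.card = a)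
    (y : Finset (Fin a ⊕ Fin b)) (hyfeas : y.card ≤ a)
    (hbetter : bipCov a b y > bipCov a b xlocal) :
    ((y \ xlocal).filter (fun s => s.isLeft)).card ≥ d ∧
    (xlocal \ y).card ≥ d := by
  have hnx : ∀ i : Fin a, Sum.inl i ∉ xlocal := fun i hi => by simpa using hxr _ hi
  have hxl0 : xlocal.toLeft = ∅ := by
    ext i; simp [hnx i]
  have hxrc : xlocal.toRight.card = a := by
    have := card_toLeft_add_card_toRight (u := xlocal)
    rw [hxl0] at this; simpa [hxc] using this
  -- value of xlocal
  have hcovx : bipCov a b xlocal = a * a := by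
    have := bipCov_eq a b xlocal
    rw [hxl0, hxrc] at this; simpa using this
  set L := y.toLeft.card with hLdef
  set R := y.toRight.card with hRdef
  have hLR : L + R ≤ a := by
    have := card_toLeft_add_card_toRight (u := y); omega
  have hcovy : bipCov a b y + L * R = L * b + a * R := bipCov_eq a b y
  -- arithmetic relation 2a = b + d
  have h2a : 2 * a = b + d := by
    have : (2 * a : ℝ) = b + d := by push_cast [ha, hb, hd]; ring
    exact_mod_cast this
  -- key: L ≥ d
  have hLd : d ≤ L := by
    by_contra hcon
    push_neg at hcon
    have hZ : (bipCov a b y : ℤ) + L * R = L * b + a * R := by exact_mod_cast hcovy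
    have hgt : (a : ℤ) * a < bipCov a b y := by
      have := hbetter; rw [hcovx] at this; exact_mod_cast this
    have h2aZ : (2 * a : ℤ) = b + d := by exact_mod_cast h2a
    have hLRZ : (L : ℤ) + R ≤ a := by exact_mod_cast hLR
    have hLz : (L : ℤ) < d := by exact_mod_cast hcon
    nlinarith [mul_nonneg (by omega : (0:ℤ) ≤ (a : ℤ) - L)
        (by omega : (0:ℤ) ≤ (a : ℤ) - L - R),
      mul_nonneg (by positivity : (0:ℤ) ≤ (L : ℤ)) (by omega : (0:ℤ) ≤ (d : ℤ) - L)]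
  constructor
  · -- left part
    have hfe : (y \ xlocal).filter (fun s => s.isLeft)
        = y.toLeft.map ⟨Sum.inl, Sum.inl_injective⟩ := by
      ext s
      rcases s with i | j
      · simp [hnx i]
      · simp
    rw [hfe, card_map]
    exact hLd
  · -- right part
    have e1 : (xlocal \ y).card + (xlocal ∩ y).card = a := by
      rw [card_sdiff_add_card_inter, hxc]
    have e2 : (xlocal ∩ y).card ≤ R := by
      have hsub : (xlocal ∩ y).toRight ⊆ y.toRight :=
        toRight_subset_toRight (inter_subset_right)
      have hle := card_le_card hsub
      have h0 : (xlocal ∩ y).toLeft = ∅ := by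
        ext i; simp only [mem_toLeft, mem_inter, notMem_empty, iff_false]
        exact fun h => hnx i h.1
      have := card_toLeft_add_card_toRight (u := xlocal ∩ y)
      rw [h0] at this
      simp only [card_empty] at this
      omega
    omega
end
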